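/- For every monotone nondecreasing deadline function D : {1,2,…} → {1,2,…} there exists a countable language collection ℒ such that: for every randomized generator 𝒜, if sup_{K∈ℒ} sup_{E∈ℰ(K)} H_𝒜^{ℒ,K,E}(t) = o(D^{−1}(t)/t) as t → ∞, then there exist a language K ∈ ℒ and a total enumeration E ∈ ℰ(K) such that, almost surely over the generator's internal randomness, liminf_{i→∞} μ^el_i(𝒜(E),K,D) = 0; consequently μ^el_low(𝒜,D) = 0 almost surely. -/

import Mathlib

open MeasureTheory Filter
open scoped Classical

noncomputable section

/-- The output `o_t` (for `t ≥ 1`) of a generator with next-output function `g`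
on the input sequence `X` (indexed from 1): `o_t = g [x_1, …, x_t]`. -/
def outSeq (g : List ℕ → ℕ) (X : ℕ → ℕ) (t : ℕ) : ℕ :=
  g ((List.range t).map fun s => X (s + 1))

/-- The output prefix set `𝒜(X)_t = {o_1, …, o_t}`. -/
def outUpTo (g : List ℕ → ℕ) (X : ℕ → ℕ) (t : ℕ) : Finset ℕ :=
  (Finset.Icc 1 t).image (outSeq g X)

/-- The observed strings `{x_1, …, x_t}`. -/
def obsUpTo (X : ℕ → ℕ) (t : ℕ) : Finset ℕ :=
  (Finset.Icc 1 t).image X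

/-- Validity constraint on a generator: each output is a fresh string, i.e.
`o_t ∉ {x_1,…,x_t} ∪ {o_1,…,o_{t−1}}`. -/
def ValidGen (g : List ℕ → ℕ) : Prop :=
  ∀ (X : ℕ → ℕ) (t : ℕ), 1 ≤ t →
    (∀ s, 1 ≤ s → s ≤ t → outSeq g X t ≠ X s) ∧
    (∀ s, 1 ≤ s → s < t → outSeq g X t ≠ outSeq g X s)

/-- A randomized generator: a probability space `(Ω, P)` of seeds together with a
measurable family of deterministic (valid) generators. -/
structure RandGen where
  Ω : Type
  mΩ : MeasurableSpace Ω
  P : @Measure Ω mΩ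
  prob : @IsProbabilityMeasure Ω mΩ P
  gen : Ω → List ℕ → ℕ
  valid : ∀ ω, ValidGen (gen ω)
  meas : ∀ l : List ℕ, @Measurable Ω ℕ mΩ inferInstance (fun ω => gen ω l)

/-- `k_j`: the `j`-th smallest element of `K` (for `j ≥ 1`). -/
def nthElem (K : Set ℕ) (j : ℕ) : ℕ := Nat.nth (· ∈ K) (j - 1)

/-- `K_i = {k_1, …, k_i}`: the `i` smallest elements of `K`. -/
def prefixSet (K : Set ℕ) (i : ℕ) : Finset ℕ := (Finset.Icc 1 i).image (nthElem K)

/-- Timely element-wise density `μ^el_i(𝒜(X), K, D)`. -/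
def muEl (g : List ℕ → ℕ) (X : ℕ → ℕ) (K : Set ℕ) (D : ℕ → ℕ) (i : ℕ) : ℝ :=
  (∑ j ∈ Finset.Icc 1 i, if nthElem K j ∈ outUpTo g X (D j) then (1 : ℝ) else 0) / i

/-- Prefix-wise density `μ^pfx_i(𝒜(X), K, D) = |𝒜(X)_{D(i)} ∩ K_i| / i`. -/
def muPfx (g : List ℕ → ℕ) (X : ℕ → ℕ) (K : Set ℕ) (D : ℕ → ℕ) (i : ℕ) : ℝ :=
  ((outUpTo g X (D i) ∩ prefixSet K i).card : ℝ) / i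

/-- The number of hallucinations `|𝒜(X)_t \ K|` of a deterministic generator. -/
def hallucCount (g : List ℕ → ℕ) (X : ℕ → ℕ) (K : Set ℕ) (t : ℕ) : ℕ :=
  ((outUpTo g X t).filter fun n => n ∉ K).card

/-- The hallucination rate `H_𝒜^{ℒ,K,X}(t) = 𝔼[|𝒜(X)_t \ K| / t]`,
the expectation being over the internal randomness (the seed). -/
def hallucRate (A : RandGen) (X : ℕ → ℕ) (K : Set ℕ) (t : ℕ) : ℝ :=
  ∫ ω, (hallucCount (A.gen ω) X K t : ℝ) / t ∂A.P

/-- `E ∈ ℰ(K)`: a total enumeration (with possible repetitions) of `K`. -/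
def IsEnumOf (E : ℕ → ℕ) (K : Set ℕ) : Prop :=
  (∀ t, 1 ≤ t → E t ∈ K) ∧ ∀ k ∈ K, ∃ t, 1 ≤ t ∧ E t = k

/-- A countable collection of languages (infinite sets of strings). -/
def IsLangCollection (L : Set (Set ℕ)) : Prop :=
  L.Countable ∧ ∀ K ∈ L, K.Infinite

/-- Generalized inverse `D⁻¹(t) = min {n ≥ 1 : D(n) ≥ t}`. -/
def Dinv (D : ℕ → ℕ) (t : ℕ) : ℕ := sInf {n | 1 ≤ n ∧ t ≤ D n}

/-- A feasible profile `(D, H)`: `D` is a monotone nondecreasing, discrete convex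
(`D(m+1) − D(m) ≥ D(m) − D(m−1)`), superlinear deadline function, and `H` is a
nonnegative monotone nonincreasing vanishing function with `t·H(t)/D⁻¹(t) → ∞`. -/
def FeasibleProfile (D : ℕ → ℕ) (H : ℕ → ℝ) : Prop :=
  (∀ i, 1 ≤ i → 1 ≤ D i) ∧
  (∀ m n, 1 ≤ m → m ≤ n → D m ≤ D n) ∧
  (∀ m, 2 ≤ m → D m + D m ≤ D (m + 1) + D (m - 1)) ∧
  Tendsto (fun i : ℕ => (D i : ℝ) / i) atTop atTop ∧
  (∀ t, 0 ≤ H t) ∧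
  (∀ s t, 1 ≤ s → s ≤ t → H t ≤ H s) ∧
  Tendsto H atTop (nhds 0) ∧
  Tendsto (fun t : ℕ => (t : ℝ) * H t / (Dinv D t : ℝ)) atTop atTop



def fF (F : Finset ℕ) (i : ℕ) : ℕ := 2 * (i + 1) + (if (i + 1) ∈ F then 1 else 0)

def KF (F : Finset ℕ) : Set ℕ := Set.range (fF F)

lemma fF_strictMono (F : Finset ℕ) : StrictMono (fF F) := by
  apply strictMono_nat_of_lt_succ
  intro m
  unfold fF
  by_cases h1 : (m+1) ∈ F <;> by_cases h2 : (m+2) ∈ F <;> simp [h1, h2] <;> omega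

lemma count_KF (F : Finset ℕ) (i : ℕ) : Nat.count (· ∈ KF F) (fF F i) = i := by
  rw [Nat.count_eq_card_filter_range]
  have h : (Finset.range (fF F i)).filter (· ∈ KF F) = (Finset.range i).image (fF F) := by
    ext m
    simp only [Finset.mem_filter, Finset.mem_range, Finset.mem_image, KF, Set.mem_range]
    constructor
    · rintro ⟨hlt, i', rfl⟩
      exact ⟨i', (fF_strictMono F).lt_iff_lt.mp hlt, rfl⟩
    · rintro ⟨i', hi', rfl⟩
      exact ⟨(fF_strictMono F).lt_iff_lt.mpr hi', ⟨i', rfl⟩⟩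
  rw [h, Finset.card_image_of_injective _ (fF_strictMono F).injective, Finset.card_range]

lemma nth_KF (F : Finset ℕ) (j : ℕ) (hj : 1 ≤ j) : nthElem (KF F) j = fF F (j - 1) := by
  have h := Nat.nth_count (p := (· ∈ KF F)) (n := fF F (j-1)) ⟨j-1, rfl⟩
  rw [count_KF] at h
  exact h

lemma nth_Kempty {j : ℕ} (hj : 1 ≤ j) : nthElem (KF ∅) j = 2 * j := by
  rw [nth_KF ∅ j hj]
  unfold fF
  simp only [Finset.notMem_empty, if_false, add_zero]
  omega

lemma two_mul_mem_KF (F : Finset ℕ) {j : ℕ} (hj : 1 ≤ j) (hjF : j ∉ F) : 2*j ∈ KF F := by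
  refine ⟨j - 1, ?_⟩
  unfold fF
  have h : j - 1 + 1 = j := by omega
  rw [h, if_neg hjF]
  omega

lemma two_mul_add_one_mem_KF (F : Finset ℕ) {j : ℕ} (hj : 1 ≤ j) (hjF : j ∈ F) :
    2*j + 1 ∈ KF F := by
  refine ⟨j - 1, ?_⟩
  unfold fF
  have h : j - 1 + 1 = j := by omega
  rw [h, if_pos hjF]

lemma two_mul_not_mem_KF {F : Finset ℕ} {j : ℕ} (hj : j ∈ F) : (2*j) ∉ KF F := by
  rintro ⟨i, hi⟩
  unfold fF at hi
  by_cases h : (i+1) ∈ F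
  · rw [if_pos h] at hi; omega
  · rw [if_neg h] at hi
    have he : i + 1 = j := by omega
    exact h (he ▸ hj)

lemma KF_infinite (F : Finset ℕ) : (KF F).Infinite :=
  Set.infinite_of_injective_forall_mem (fF_strictMono F).injective (fun i => ⟨i, rfl⟩)

lemma outUpTo_mono (g : List ℕ → ℕ) (X : ℕ → ℕ) {a b : ℕ} (h : a ≤ b) :
    outUpTo g X a ⊆ outUpTo g X b :=
  Finset.image_subset_image (Finset.Icc_subset_Icc_right h)

lemma outUpTo_card_le (g : List ℕ → ℕ) (X : ℕ → ℕ) (t : ℕ) : (outUpTo g X t).card ≤ t :=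
  le_trans Finset.card_image_le (by simp)

lemma hallucCount_le (g : List ℕ → ℕ) (X : ℕ → ℕ) (K : Set ℕ) (t : ℕ) :
    hallucCount g X K t ≤ t :=
  le_trans (Finset.card_filter_le _ _) (outUpTo_card_le g X t)

lemma outUpTo_congr {g : List ℕ → ℕ} {X Y : ℕ → ℕ} {t : ℕ}
    (h : ∀ u, 1 ≤ u → u ≤ t → X u = Y u) : outUpTo g X t = outUpTo g Y t := by
  unfold outUpTo
  apply Finset.image_congr
  intro s hs
  simp only [Finset.coe_Icc, Set.mem_Icc] at hs
  unfold outSeq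
  congr 1
  apply List.map_congr_left
  intro u hu
  have hu' : u < s := List.mem_range.mp hu
  exact h (u+1) (by omega) (by omega)

lemma sum_ind_le (g : List ℕ → ℕ) (E : ℕ → ℕ) (D : ℕ → ℕ) (i C : ℕ)
    (hC : ∀ j, 1 ≤ j → j ≤ i → D j ≤ C) :
    (∑ j ∈ Finset.Icc 1 i, if nthElem (KF ∅) j ∈ outUpTo g E (D j) then (1:ℝ) else 0)
      ≤ (C : ℝ) := by
  rw [Finset.sum_boole]
  have hcard : ((Finset.Icc 1 i).filter
      (fun j => nthElem (KF ∅) j ∈ outUpTo g E (D j))).card ≤ C := by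
    have h1 : ((Finset.Icc 1 i).filter
        (fun j => nthElem (KF ∅) j ∈ outUpTo g E (D j))).card ≤ (outUpTo g E C).card := by
      apply Finset.card_le_card_of_injOn (fun j => 2*j)
      · intro j hj
        simp only [Finset.mem_coe, Finset.mem_filter, Finset.mem_Icc] at hj
        obtain ⟨⟨hj1, hji⟩, hmem⟩ := hj
        rw [nth_Kempty hj1] at hmem
        exact outUpTo_mono g E (hC j hj1 hji) hmem
      · intro a _ b _ hab
        dsimp at hab; omega
    exact le_trans h1 (outUpTo_card_le g E C)
  exact_mod_cast hcard

lemma sum_ind_le_halluc (g : List ℕ → ℕ) (E E' : ℕ → ℕ) (D : ℕ → ℕ)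
    (hDmono : ∀ m n, 1 ≤ m → m ≤ n → D m ≤ D n)
    (a b : ℕ) (ha : 1 ≤ a) (hab : a ≤ b)
    (hagree : ∀ u, 1 ≤ u → u ≤ D b → E u = E' u) :
    (∑ j ∈ Finset.Ioc a b, if nthElem (KF ∅) j ∈ outUpTo g E (D j) then (1:ℝ) else 0)
      ≤ (hallucCount g E' (KF (Finset.Ioc a b)) (D b) : ℝ) := by
  rw [Finset.sum_boole]
  have hcard : ((Finset.Ioc a b).filter
      (fun j => nthElem (KF ∅) j ∈ outUpTo g E (D j))).card
      ≤ hallucCount g E' (KF (Finset.Ioc a b)) (D b) := by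
    unfold hallucCount
    apply Finset.card_le_card_of_injOn (fun j => 2*j)
    · intro j hj
      simp only [Finset.mem_coe, Finset.mem_filter, Finset.mem_Ioc] at hj
      obtain ⟨⟨hja, hjb⟩, hmem⟩ := hj
      have hj1 : 1 ≤ j := by omega
      rw [nth_Kempty hj1] at hmem
      have h2 : 2*j ∈ outUpTo g E (D b) := outUpTo_mono g E (hDmono j b hj1 hjb) hmem
      rw [outUpTo_congr hagree] at h2
      refine Finset.mem_filter.mpr ⟨h2, two_mul_not_mem_KF (Finset.mem_Ioc.mpr ⟨hja, hjb⟩)⟩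
    · intro x _ y _ hxy
      dsimp at hxy; omega
  exact_mod_cast hcard

lemma measurable_hallucCount_cast {Ω : Type} [MeasurableSpace Ω] (gen : Ω → List ℕ → ℕ)
    (hg : ∀ l : List ℕ, Measurable fun ω => gen ω l) (X : ℕ → ℕ) (K : Set ℕ) (t : ℕ) :
    Measurable fun ω => ((hallucCount (gen ω) X K t : ℕ) : ℝ) := by
  have h1 : Measurable fun ω => hallucCount (gen ω) X K t := by
    apply measurable_to_countable'
    intro k
    set L : ℕ → List ℕ := fun m => (List.range m).map fun u => X (u+1) with hL
    set Φ : (Fin t → ℕ) → ℕ := fun v =>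
      (((Finset.Icc 1 t).image fun s => if h : s - 1 < t then v ⟨s-1, h⟩ else 0).filter
        fun m => m ∉ K).card with hΦ
    have hfac : ∀ g' : List ℕ → ℕ, hallucCount g' X K t = Φ (fun s => g' (L (s.1+1))) := by
      intro g'
      unfold hallucCount outUpTo
      rw [hΦ]
      have himg : (Finset.Icc 1 t).image (outSeq g' X)
          = (Finset.Icc 1 t).image fun s =>
              if h : s - 1 < t then (fun s : Fin t => g' (L (s.1+1))) ⟨s-1, h⟩ else 0 := by
        apply Finset.image_congr
        intro s hs
        simp only [Finset.coe_Icc, Set.mem_Icc] at hs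
        have hlt : s - 1 < t := by omega
        dsimp only
        rw [dif_pos hlt]
        have hs1 : s - 1 + 1 = s := by omega
        rw [hs1]
        rfl
      rw [himg]
    have hset : (fun ω => hallucCount (gen ω) X K t) ⁻¹' {k} =
        ⋃ (v : Fin t → ℕ) (_ : Φ v = k), ⋂ s : Fin t, {ω | gen ω (L (s.1+1)) = v s} := by
      ext ω
      simp only [Set.mem_preimage, Set.mem_singleton_iff, Set.mem_iUnion, Set.mem_iInter,
        Set.mem_setOf_eq]
      constructor
      · intro h
        refine ⟨fun s => gen ω (L (s.1+1)), ?_, fun s => rfl⟩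
        rw [← hfac (gen ω)]; exact h
      · rintro ⟨v, hv, hs⟩
        rw [hfac (gen ω)]
        have hfe : (fun s : Fin t => gen ω (L (s.1+1))) = v := funext hs
        rw [hfe]; exact hv
    rw [hset]
    exact MeasurableSet.iUnion fun v => MeasurableSet.iUnion fun _ =>
      MeasurableSet.iInter fun s => (hg (L (s.1+1))) (measurableSet_singleton (v s))
  exact (measurable_of_countable _).comp h1


/-- **Hallucination Barrier.**
For every monotone nondecreasing deadline function `D` there is a countable language
collection `ℒ` such that: every randomized generator `𝒜` with
`sup_{K∈ℒ} sup_{E∈ℰ(K)} H_𝒜^{ℒ,K,E}(t) = o(D⁻¹(t)/t)` admits `K ∈ ℒ` and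
`E ∈ ℰ(K)` on which, almost surely, `liminf_{i→∞} μ^el_i(𝒜(E),K,D) = 0`. -/
theorem stmt2 (D : ℕ → ℕ) (hD1 : ∀ i, 1 ≤ i → 1 ≤ D i)
    (hDmono : ∀ m n, 1 ≤ m → m ≤ n → D m ≤ D n) :
    ∃ L : Set (Set ℕ), IsLangCollection L ∧
      ∀ A : RandGen,
        (∀ ε : ℝ, 0 < ε → ∃ T, ∀ t, T ≤ t →
          ∀ K ∈ L, ∀ E : ℕ → ℕ, IsEnumOf E K →
            hallucRate A E K t ≤ ε * (Dinv D t : ℝ) / t) →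
        ∃ K ∈ L, ∃ E : ℕ → ℕ, IsEnumOf E K ∧
          ∀ᵐ ω ∂A.P, liminf (fun i => muEl (A.gen ω) E K D i) atTop = 0 := by
  classical
  refine ⟨Set.range KF, ⟨Set.countable_range _, ?_⟩, ?_⟩
  · rintro K ⟨F, rfl⟩; exact KF_infinite F
  intro A hyp
  letI : MeasurableSpace A.Ω := A.mΩ
  haveI : IsProbabilityMeasure A.P := A.prob
  -- helper facts about muEl
  have hmuEl_nonneg : ∀ (g : List ℕ → ℕ) (E : ℕ → ℕ) (K : Set ℕ) (i : ℕ),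
      0 ≤ muEl g E K D i := by
    intro g E K i
    apply div_nonneg _ (Nat.cast_nonneg i)
    apply Finset.sum_nonneg
    intro j _
    split <;> norm_num
  by_cases hbd : ∃ C, ∀ m, 1 ≤ m → D m ≤ C
  · -- D is bounded : trivial case
    obtain ⟨C, hC⟩ := hbd
    refine ⟨KF ∅, ⟨∅, rfl⟩, (fun t => 2*t), ⟨?_, ?_⟩, ?_⟩
    · intro t ht
      exact two_mul_mem_KF ∅ ht (Finset.notMem_empty t)
    · rintro k ⟨i, rfl⟩
      refine ⟨i+1, by omega, ?_⟩
      unfold fF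
      simp
    · apply ae_of_all
      intro ω
      have hb : ∀ i : ℕ, muEl (A.gen ω) (fun t => 2*t) (KF ∅) D i ≤ (C:ℝ)/(i:ℝ) := by
        intro i
        unfold muEl
        rcases Nat.eq_zero_or_pos i with h0 | hpos
        · simp [h0]
        · have hle := sum_ind_le (A.gen ω) (fun t => 2*t) D i C (fun j hj1 _ => hC j hj1)
          have hipos : (0:ℝ) < (i:ℝ) := by exact_mod_cast hpos
          exact (div_le_div_iff_of_pos_right hipos).mpr hle
      have htend : Tendsto (fun i : ℕ => muEl (A.gen ω) (fun t => 2*t) (KF ∅) D i) atTop (nhds 0) :=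
        squeeze_zero (fun i => hmuEl_nonneg _ _ _ i) hb (tendsto_const_div_atTop_nhds_zero_nat (C:ℝ))
      exact htend.liminf_eq
  · -- D unbounded : the main case
    push_neg at hbd
    -- hbd : ∀ C, ∃ m, 1 ≤ m ∧ C < D m
    set ε : ℕ → ℝ := fun r => 1 / ((r:ℝ)+1)^3 with hε
    have hεpos : ∀ r, 0 < ε r := fun r => by rw [hε]; positivity
    choose Tc hTc using fun r => hyp (ε r) (hεpos r)
    choose mw hmw1 hmwD using hbd
    -- the scale sequence
    obtain ⟨n, hn0, hnrec⟩ :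
        ∃ n : ℕ → ℕ, n 0 = 1 ∧
          ∀ r, 2*(r+1)^3*(n r) + 1 ≤ n (r+1) ∧ mw (Tc r) ≤ n (r+1) :=
      ⟨fun r => Nat.rec 1 (fun r nr => max (2*(r+1)^3*nr + 1) (mw (Tc r))) r, rfl,
        fun r => ⟨le_max_left _ _, le_max_right _ _⟩⟩
    have hgrow : ∀ r, 2*(r+1)^3*(n r) + 1 ≤ n (r+1) := fun r => (hnrec r).1
    have hmwle : ∀ r, mw (Tc r) ≤ n (r+1) := fun r => (hnrec r).2
    have hn1 : ∀ r, 1 ≤ n r := by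
      intro r
      cases r with
      | zero => rw [hn0]
      | succ r => have := hgrow r; omega
    have hlt : ∀ r, n r < n (r+1) := by
      intro r
      have h1 := hgrow r
      have h3 : 0 < 2*(r+1)^3 := by positivity
      have h4 : n r ≤ 2*(r+1)^3*(n r) := Nat.le_mul_of_pos_left (n r) h3
      omega
    have hnmono : Monotone n := monotone_nat_of_le_succ (fun r => (hlt r).le)
    have hnD : ∀ r, Tc r ≤ D (n (r+1)) :=
      fun r => le_trans (hmwD (Tc r)).le (hDmono _ _ (hmw1 (Tc r)) (hmwle r))
    have hnlb : ∀ r, r + 1 ≤ n r := by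
      intro r
      induction r with
      | zero => have := hn0; omega
      | succ r ih => have := hlt r; omega
    -- position of an index in the scale sequence, and reveal times
    set sfun : ℕ → ℕ := fun j => sInf {s | j ≤ n s} with hsfdef
    have hsfun_ne : ∀ j, {s | j ≤ n s}.Nonempty := by
      intro j
      refine ⟨j, ?_⟩
      have := hnlb j
      simp only [Set.mem_setOf_eq]
      omega
    have hsfun_le : ∀ j, j ≤ n (sfun j) := fun j => Nat.sInf_mem (hsfun_ne j)
    have hsfun_min : ∀ j s, j ≤ n s → sfun j ≤ s := fun j s h => Nat.sInf_le h
    have hsfun_eq : ∀ r j, n r < j → j ≤ n (r+1) → sfun j = r + 1 := by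
      intro r j h1 h2
      have hle := hsfun_min j (r+1) h2
      rcases Nat.lt_or_ge (sfun j) (r+1) with h | h
      · have h3 := hsfun_le j
        have h4 := hnmono (show sfun j ≤ r by omega)
        omega
      · omega
    set tau : ℕ → ℕ := fun j => D (n (sfun j)) + n (sfun j) + j with htaudef
    have htauval : ∀ j, tau j = D (n (sfun j)) + n (sfun j) + j := fun j => rfl
    have htau4 : ∀ j, 2 ≤ j → 4 ≤ tau j := by
      intro j hj
      have h1 := hD1 (n (sfun j)) (hn1 _)
      have h2 := hn1 (sfun j)
      rw [htauval]
      omega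
    have htault : ∀ j j', 2 ≤ j → 2 ≤ j' → sfun j < sfun j' → tau j < tau j' := by
      intro j j' hj hj' hs
      have h1 : j ≤ n (sfun j) := hsfun_le j
      have h2 : n (sfun j' - 1) < j' := by
        rcases Nat.lt_or_ge (n (sfun j' - 1)) j' with h | h
        · exact h
        · exfalso
          have := hsfun_min j' (sfun j' - 1) h
          omega
      have h3 : n (sfun j) ≤ n (sfun j' - 1) := hnmono (by omega)
      have h4 : D (n (sfun j)) ≤ D (n (sfun j')) := hDmono _ _ (hn1 _) (hnmono hs.le)
      have h6 : n (sfun j) ≤ n (sfun j') := hnmono hs.le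
      rw [htauval, htauval]
      omega
    have htauinj : ∀ j j', 2 ≤ j → 2 ≤ j' → tau j = tau j' → j = j' := by
      intro j j' hj hj' he
      rcases lt_trichotomy (sfun j) (sfun j') with h | h | h
      · exact absurd he (ne_of_lt (htault j j' hj hj' h))
      · rw [htauval, htauval, h] at he
        omega
      · exact absurd he.symm (ne_of_lt (htault j' j hj' hj h))
    have htau_gt : ∀ r j, n r < j → j ≤ n (r+1) → D (n (r+1)) < tau j := by
      intro r j h1 h2
      rw [htauval, hsfun_eq r j h1 h2]
      have := hn1 (r+1)
      omega
    -- the enumerations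
    set EE : ℕ → ℕ := fun x => if h : ∃ j, 2 ≤ j ∧ tau j = x then 2 * Nat.find h else 2 with hEE
    set EE' : ℕ → ℕ → ℕ := fun r x => if h : ∃ j, 2 ≤ j ∧ tau j = x then
        2 * Nat.find h + (if Nat.find h ∈ Finset.Ioc (n r) (n (r+1)) then 1 else 0) else 2
      with hEE'
    have hfind : ∀ j (hj : 2 ≤ j) (h : ∃ j', 2 ≤ j' ∧ tau j' = tau j), Nat.find h = j := by
      intro j hj h
      have hs := Nat.find_spec h
      exact htauinj _ _ hs.1 hj hs.2
    have hEEenum : IsEnumOf EE (KF ∅) := by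
      constructor
      · intro t ht
        simp only [hEE]
        by_cases h : ∃ j, 2 ≤ j ∧ tau j = t
        · rw [dif_pos h]
          exact two_mul_mem_KF ∅ (by have := (Nat.find_spec h).1; omega)
            (Finset.notMem_empty _)
        · rw [dif_neg h]
          simpa using two_mul_mem_KF ∅ le_rfl (Finset.notMem_empty 1)
      · rintro k ⟨i, rfl⟩
        rcases Nat.eq_zero_or_pos i with h0 | hpos
        · refine ⟨1, le_rfl, ?_⟩
          subst h0
          simp only [hEE]
          rw [dif_neg ?_]
          · unfold fF; simp
          · rintro ⟨j, hj2, hjt⟩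
            have := htau4 j hj2
            omega
        · refine ⟨tau (i+1), by have := htau4 (i+1) (by omega); omega, ?_⟩
          have hex : ∃ j, 2 ≤ j ∧ tau j = tau (i+1) := ⟨i+1, by omega, rfl⟩
          simp only [hEE]
          rw [dif_pos hex, hfind (i+1) (by omega) hex]
          unfold fF
          simp
    have hEE'enum : ∀ r, IsEnumOf (EE' r) (KF (Finset.Ioc (n r) (n (r+1)))) := by
      intro r
      have h1F : (1:ℕ) ∉ Finset.Ioc (n r) (n (r+1)) := by
        simp only [Finset.mem_Ioc, not_and]
        have := hn1 r
        omega
      constructor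
      · intro t ht
        simp only [hEE']
        by_cases h : ∃ j, 2 ≤ j ∧ tau j = t
        · rw [dif_pos h]
          have hj2 := (Nat.find_spec h).1
          by_cases hmem : Nat.find h ∈ Finset.Ioc (n r) (n (r+1))
          · rw [if_pos hmem]
            exact two_mul_add_one_mem_KF _ (by omega) hmem
          · rw [if_neg hmem]
            simpa using two_mul_mem_KF _ (show 1 ≤ Nat.find h by omega) hmem
        · rw [dif_neg h]
          simpa using two_mul_mem_KF _ le_rfl h1F
      · rintro k ⟨i, rfl⟩
        rcases Nat.eq_zero_or_pos i with h0 | hpos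
        · refine ⟨1, le_rfl, ?_⟩
          subst h0
          simp only [hEE']
          rw [dif_neg ?_]
          · unfold fF; simp [h1F]
          · rintro ⟨j, hj2, hjt⟩
            have := htau4 j hj2
            omega
        · refine ⟨tau (i+1), by have := htau4 (i+1) (by omega); omega, ?_⟩
          have hex : ∃ j, 2 ≤ j ∧ tau j = tau (i+1) := ⟨i+1, by omega, rfl⟩
          simp only [hEE']
          rw [dif_pos hex, hfind (i+1) (by omega) hex]
          rfl
    have hagree : ∀ r x, 1 ≤ x → x ≤ D (n (r+1)) → EE x = EE' r x := by
      intro r x hx1 hxD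
      simp only [hEE, hEE']
      by_cases h : ∃ j, 2 ≤ j ∧ tau j = x
      · rw [dif_pos h, dif_pos h]
        have hspec := Nat.find_spec h
        have hnotmem : Nat.find h ∉ Finset.Ioc (n r) (n (r+1)) := by
          intro hmem
          rw [Finset.mem_Ioc] at hmem
          have := htau_gt r (Nat.find h) hmem.1 hmem.2
          omega
        rw [if_neg hnotmem]
        omega
      · rw [dif_neg h, dif_neg h]
    -- hallucination-count random variables
    set H : ℕ → A.Ω → ℕ := fun r ω =>
      hallucCount (A.gen ω) (EE' r) (KF (Finset.Ioc (n r) (n (r+1)))) (D (n (r+1))) with hH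
    have httpos : ∀ r, 1 ≤ D (n (r+1)) := fun r => hD1 (n (r+1)) (hn1 (r+1))
    have hHmeas : ∀ r, Measurable fun ω => ((H r ω : ℕ) : ℝ) := fun r =>
      measurable_hallucCount_cast A.gen A.meas _ _ _
    have hHle : ∀ r ω, H r ω ≤ D (n (r+1)) := fun r ω => hallucCount_le _ _ _ _
    have hHint : ∀ r, Integrable (fun ω => ((H r ω : ℕ) : ℝ)) A.P := by
      intro r
      refine (integrable_const ((D (n (r+1)) : ℕ):ℝ)).mono' (hHmeas r).aestronglyMeasurable ?_
      apply ae_of_all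
      intro ω
      rw [Real.norm_eq_abs, abs_of_nonneg (by positivity)]
      exact_mod_cast hHle r ω
    -- expectation bound from the hypothesis
    have hint : ∀ r, (∫ ω, ((H r ω : ℕ):ℝ) ∂A.P) ≤ ε r * (n (r+1) : ℝ) := by
      intro r
      have h2 := hTc r (D (n (r+1))) (hnD r) _ ⟨Finset.Ioc (n r) (n (r+1)), rfl⟩ _ (hEE'enum r)
      have h1 : hallucRate A (EE' r) (KF (Finset.Ioc (n r) (n (r+1)))) (D (n (r+1)))
          = (∫ ω, ((H r ω : ℕ):ℝ) ∂A.P) / (D (n (r+1)) : ℝ) := by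
        unfold hallucRate
        rw [integral_div]
      rw [h1] at h2
      have htpos : (0:ℝ) < (D (n (r+1)) : ℝ) := by exact_mod_cast httpos r
      have h3 : (∫ ω, ((H r ω : ℕ):ℝ) ∂A.P) ≤ ε r * (Dinv D (D (n (r+1))) : ℝ) :=
        (div_le_div_iff_of_pos_right htpos).mp h2
      have hDinvle : (Dinv D (D (n (r+1))) : ℝ) ≤ (n (r+1) : ℝ) := by
        have : Dinv D (D (n (r+1))) ≤ n (r+1) := Nat.sInf_le ⟨hn1 (r+1), le_rfl⟩
        exact_mod_cast this
      calc (∫ ω, ((H r ω : ℕ):ℝ) ∂A.P) ≤ ε r * (Dinv D (D (n (r+1))) : ℝ) := h3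
        _ ≤ ε r * (n (r+1) : ℝ) := mul_le_mul_of_nonneg_left hDinvle (hεpos r).le
    -- Markov bound
    set a : ℕ → ℝ := fun r => (n (r+1) : ℝ) / (2*((r:ℝ)+1)) with hadef
    have hapos : ∀ r, 0 < a r := by
      intro r
      have h1 : (0:ℝ) < (n (r+1):ℝ) := by exact_mod_cast hn1 (r+1)
      rw [hadef]
      positivity
    have hmarkov : ∀ r, (A.P {ω | a r ≤ ((H r ω : ℕ):ℝ)}).toReal ≤ 2/((r:ℝ)+1)^2 := by
      intro r
      have hm := mul_meas_ge_le_integral_of_nonneg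
        (ae_of_all _ (fun ω => by positivity : ∀ ω, (0:ℝ) ≤ ((H r ω:ℕ):ℝ))) (hHint r) (a r)
      have h2 := le_trans hm (hint r)
      have hnr : (0:ℝ) < (n (r+1):ℝ) := by exact_mod_cast hn1 (r+1)
      have hr1 : (0:ℝ) < (r:ℝ)+1 := by positivity
      have heq : ε r * (n (r+1):ℝ) / a r = 2/((r:ℝ)+1)^2 := by
        simp only [hε, hadef]
        field_simp
      rw [← heq, le_div_iff₀ (hapos r)]
      calc (A.P {ω | a r ≤ ((H r ω : ℕ):ℝ)}).toReal * a r
          = a r * (A.P {ω | a r ≤ ((H r ω : ℕ):ℝ)}).toReal := by ring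
        _ ≤ ε r * (n (r+1):ℝ) := h2
    -- Borel-Cantelli
    have hsum : (∑' r, A.P {ω | a r ≤ ((H r ω : ℕ):ℝ)}) ≠ ⊤ := by
      have hle : ∀ r, A.P {ω | a r ≤ ((H r ω:ℕ):ℝ)} ≤ ENNReal.ofReal (2/((r:ℝ)+1)^2) := by
        intro r
        rw [← ENNReal.ofReal_toReal (measure_ne_top A.P _)]
        exact ENNReal.ofReal_le_ofReal (hmarkov r)
      have hsummable : Summable (fun r : ℕ => 2/((r:ℝ)+1)^2) := by
        have h1 : Summable (fun r : ℕ => (1:ℝ)/(r:ℝ)^2) := by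
          rw [Real.summable_one_div_nat_pow]
          norm_num
        have h2 := (summable_nat_add_iff 1).mpr h1
        have h3 := h2.mul_left 2
        apply h3.congr
        intro r
        push_cast
        ring
      apply ne_top_of_le_ne_top (b := ENNReal.ofReal (∑' r : ℕ, 2/((r:ℝ)+1)^2))
        ENNReal.ofReal_ne_top
      calc (∑' r, A.P {ω | a r ≤ ((H r ω : ℕ):ℝ)})
          ≤ ∑' r : ℕ, ENNReal.ofReal (2/((r:ℝ)+1)^2) := ENNReal.tsum_le_tsum hle
        _ = ENNReal.ofReal (∑' r : ℕ, 2/((r:ℝ)+1)^2) :=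
            (ENNReal.ofReal_tsum_of_nonneg (fun r => by positivity) hsummable).symm
    have hBC := measure_setOf_frequently_eq_zero (μ := A.P)
      (p := fun r ω => a r ≤ ((H r ω : ℕ):ℝ)) hsum
    have hae : ∀ᵐ ω ∂A.P, ∀ᶠ r : ℕ in atTop, ¬ (a r ≤ ((H r ω:ℕ):ℝ)) := by
      rw [MeasureTheory.ae_iff]
      have hset : {ω | ¬ ∀ᶠ r : ℕ in atTop, ¬ (a r ≤ ((H r ω:ℕ):ℝ))}
          = {ω | ∃ᶠ r : ℕ in atTop, a r ≤ ((H r ω:ℕ):ℝ)} := by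
        ext ω
        simp only [Set.mem_setOf_eq, Filter.not_eventually, not_not]
      rw [hset]
      exact hBC
    -- conclusion
    refine ⟨KF ∅, ⟨∅, rfl⟩, EE, hEEenum, ?_⟩
    filter_upwards [hae] with ω hω
    set f : ℕ → ℝ := fun i => muEl (A.gen ω) EE (KF ∅) D i with hf
    have hfle1 : ∀ i : ℕ, f i ≤ 1 := by
      intro i
      rw [hf]
      unfold muEl
      rcases Nat.eq_zero_or_pos i with h0 | hpos
      · simp [h0]
      · rw [div_le_one (by exact_mod_cast hpos)]
        calc (∑ j ∈ Finset.Icc 1 i,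
              if nthElem (KF ∅) j ∈ outUpTo (A.gen ω) EE (D j) then (1:ℝ) else 0)
            ≤ ∑ j ∈ Finset.Icc 1 i, (1:ℝ) :=
              Finset.sum_le_sum (fun j _ => by split <;> norm_num)
          _ = (i:ℝ) := by simp
    have hev : ∀ᶠ r : ℕ in atTop, f (n (r+1)) ≤ 1/((r:ℝ)+1) := by
      filter_upwards [hω] with r hr
      push_neg at hr
      have hnr1 : (0:ℝ) < (n (r+1):ℝ) := by exact_mod_cast hn1 (r+1)
      have hr1 : (0:ℝ) < (r:ℝ)+1 := by positivity
      -- split the sum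
      have hu : Finset.Ioc 0 (n r) ∪ Finset.Ioc (n r) (n (r+1)) = Finset.Ioc 0 (n (r+1)) :=
        Finset.Ioc_union_Ioc_eq_Ioc (Nat.zero_le _) (hlt r).le
      have hd : Disjoint (Finset.Ioc 0 (n r)) (Finset.Ioc (n r) (n (r+1))) := by
        apply Finset.disjoint_left.mpr
        intro x hx1 hx2
        simp only [Finset.mem_Ioc] at hx1 hx2
        omega
      have hicc : Finset.Icc 1 (n (r+1)) = Finset.Ioc 0 (n (r+1)) := by
        ext x
        simp only [Finset.mem_Icc, Finset.mem_Ioc]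
        omega
      have hs1 : (∑ j ∈ Finset.Ioc 0 (n r),
            if nthElem (KF ∅) j ∈ outUpTo (A.gen ω) EE (D j) then (1:ℝ) else 0) ≤ (n r : ℝ) := by
        calc (∑ j ∈ Finset.Ioc 0 (n r),
              if nthElem (KF ∅) j ∈ outUpTo (A.gen ω) EE (D j) then (1:ℝ) else 0)
            ≤ ∑ j ∈ Finset.Ioc 0 (n r), (1:ℝ) :=
              Finset.sum_le_sum (fun j _ => by split <;> norm_num)
          _ = (n r : ℝ) := by simp
      have hs2 := sum_ind_le_halluc (A.gen ω) EE (EE' r) D hDmono (n r) (n (r+1))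
        (hn1 r) (hlt r).le (fun u hu1 hu2 => hagree r u hu1 hu2)
      have hsplit : (∑ j ∈ Finset.Icc 1 (n (r+1)),
            if nthElem (KF ∅) j ∈ outUpTo (A.gen ω) EE (D j) then (1:ℝ) else 0)
          ≤ (n r : ℝ) + ((H r ω:ℕ):ℝ) := by
        rw [hicc, ← hu, Finset.sum_union hd]
        have hs2' : (∑ j ∈ Finset.Ioc (n r) (n (r+1)),
            if nthElem (KF ∅) j ∈ outUpTo (A.gen ω) EE (D j) then (1:ℝ) else 0)
            ≤ ((H r ω:ℕ):ℝ) := by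
          rw [hH]
          exact hs2
        linarith
      -- numeric bound
      have hcast : 2*((r:ℝ)+1)^3*(n r:ℝ) + 1 ≤ (n (r+1):ℝ) := by exact_mod_cast hgrow r
      have hx3 : ((r:ℝ)+1) ≤ ((r:ℝ)+1)^3 := le_self_pow₀ (by linarith) (by norm_num)
      have hnrle : (n r : ℝ) ≤ a r := by
        rw [hadef]
        dsimp only
        rw [le_div_iff₀ (by positivity)]
        have hmul : ((r:ℝ)+1) * (n r:ℝ) ≤ ((r:ℝ)+1)^3 * (n r:ℝ) :=
          mul_le_mul_of_nonneg_right hx3 (Nat.cast_nonneg _)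
        nlinarith
      have hkey : (∑ j ∈ Finset.Icc 1 (n (r+1)),
            if nthElem (KF ∅) j ∈ outUpTo (A.gen ω) EE (D j) then (1:ℝ) else 0)
          ≤ (n (r+1):ℝ)/((r:ℝ)+1) := by
        have haa : a r + a r = (n (r+1):ℝ)/((r:ℝ)+1) := by
          rw [hadef]
          dsimp only
          field_simp
          ring
        linarith [hsplit, hnrle, hr]
      have hmu : f (n (r+1)) = (∑ j ∈ Finset.Icc 1 (n (r+1)),
            if nthElem (KF ∅) j ∈ outUpTo (A.gen ω) EE (D j) then (1:ℝ) else 0) / (n (r+1):ℝ) := rfl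
      calc f (n (r+1)) ≤ ((n (r+1):ℝ)/((r:ℝ)+1)) / (n (r+1):ℝ) := by
            rw [hmu]
            exact (div_le_div_iff_of_pos_right hnr1).mpr hkey
        _ = 1/((r:ℝ)+1) := by
            have hne : ((n (r+1):ℕ):ℝ) ≠ 0 := ne_of_gt hnr1
            rw [div_right_comm, div_self hne]
    -- liminf f = 0
    have hf01 : ∀ i, 0 ≤ f i := fun i => hmuEl_nonneg _ _ _ i
    have hbdd : IsBoundedUnder (· ≥ ·) atTop f := isBoundedUnder_of ⟨0, fun i => hf01 i⟩
    have hcob : IsCoboundedUnder (· ≥ ·) atTop f :=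
      (isBoundedUnder_of ⟨1, fun i => hfle1 i⟩).isCoboundedUnder_ge
    have hle0 : ∀ δ : ℝ, 0 < δ → liminf f atTop ≤ δ := by
      intro δ hδ
      apply liminf_le_of_frequently_le ?_ hbdd
      have hδev : ∀ᶠ r : ℕ in atTop, 1/((r:ℝ)+1) < δ :=
        tendsto_one_div_add_atTop_nhds_zero_nat.eventually (gt_mem_nhds hδ)
      have hcomb : ∀ᶠ r : ℕ in atTop, f (n (r+1)) ≤ δ := by
        filter_upwards [hev, hδev] with r h1 h2
        linarith
      have htendn : Tendsto (fun r : ℕ => n (r+1)) atTop atTop :=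
        (strictMono_nat_of_lt_succ (fun r => hlt (r+1))).tendsto_atTop
      exact htendn.frequently hcomb.frequently
    have hge0 : 0 ≤ liminf f atTop := le_liminf_of_le hcob (Eventually.of_forall hf01)
    have hle0' : liminf f atTop ≤ 0 := by
      by_contra hc
      push_neg at hc
      have := hle0 (liminf f atTop / 2) (by linarith)
      linarith
    linarith [hge0, hle0']

end
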